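/- Let 1 ≤ k ≤ n, let λ₁,…,λₙ be distinct complex numbers, and let Q be a polynomial in k variables. Then the sum over all injective maps σ : {1,…,k} → {1,…,n} of Q(λ_{σ(1)},…,λ_{σ(k)}) divided by ∏_{m=1}^{k} [ ∏_{l=m+1}^{k} (λ_{σ(l)} − λ_{σ(m)}) · ∏_{j ∉ σ({1,…,k})} (λ_j − λ_{σ(m)}) ] equals the iterated residue at infinity Res_{z₁=∞}⋯Res_{z_k=∞} of the form ∏_{1≤m<l≤k}(z_m − z_l) · Q(z₁,…,z_k) dz₁⋯dz_k / ∏_{l=1}^{k} ∏_{i=1}^{n} (λ_i − z_l). Concretely, the iterated residue here equals (−1)^k (2πi)^{−k} times the nested counterclockwise contour integrals over the circles |z_l| = R_l, l = 1,…,k, for any radii R₁,…,R_k all strictly larger than max_i |λ_i|. -/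

import Mathlib

open Polynomial

/-- The nested contour integral `∮_{|z₁|=R₁} ⋯ ∮_{|z_k|=R_k} f(z₁,…,z_k) dz_k ⋯ dz₁`
over circles centred at the origin: the outermost integral is over `z₁` (index `0`). -/
noncomputable def iterCircleInt : (k : ℕ) → ((Fin k → ℂ) → ℂ) → (Fin k → ℝ) → ℂ
  | 0, f, _ => f (fun i => i.elim0)
  | (k + 1), f, R =>
    ∮ z in C(0, R 0), iterCircleInt k (fun w => f (Fin.cons z w)) (fun i => R i.succ)

open Finset Metric
open scoped Real

namespace ResAux


lemma circleIntegral_sum {ι : Type*} (s : Finset ι) (f : ι → ℂ → ℂ) (c : ℂ) (R : ℝ)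
    (h : ∀ i ∈ s, CircleIntegrable (f i) c R) :
    (∮ z in C(c, R), ∑ i ∈ s, f i z) = ∑ i ∈ s, ∮ z in C(c, R), f i z := by
  simp only [circleIntegral, smul_sum]
  rw [intervalIntegral.integral_finset_sum]
  intro i hi
  exact (circleIntegrable_iff R).mp (h i hi)

lemma circleIntegral_add (f g : ℂ → ℂ) (c : ℂ) (R : ℝ)
    (hf : CircleIntegrable f c R) (hg : CircleIntegrable g c R) :
    (∮ z in C(c, R), (f z + g z)) = (∮ z in C(c, R), f z) + ∮ z in C(c, R), g z := by
  simp only [circleIntegral, smul_add]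
  exact intervalIntegral.integral_add ((circleIntegrable_iff R).mp hf)
    ((circleIntegrable_iff R).mp hg)

lemma circleIntegral_poly (P : ℂ[X]) {R : ℝ} (hR : 0 ≤ R) :
    (∮ z in C((0:ℂ), R), P.eval z) = 0 :=
  Complex.circleIntegral_eq_zero_of_differentiable_on_off_countable hR Set.countable_empty
    P.continuous.continuousOn (fun _ _ => P.differentiableAt)

lemma oneD {n : ℕ} {lam : Fin n → ℂ} (hlam : Function.Injective lam)
    (P : ℂ[X]) {R : ℝ} (hR0 : 0 ≤ R) (hR : ∀ i, ‖lam i‖ < R) :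
    (∮ z in C((0:ℂ), R), P.eval z / ∏ i, (lam i - z))
      = (2 * (π:ℂ) * Complex.I) *
        ∑ j, P.eval (lam j) / (-∏ i ∈ univ \ {j}, (lam i - lam j)) := by
  set r : Fin n → ℂ := fun j => P.eval (lam j) / (-∏ i ∈ univ \ {j}, (lam i - lam j)) with hr
  have hc : ∀ j, (∏ i ∈ univ \ {j}, (lam i - lam j)) ≠ 0 := by
    intro j
    refine Finset.prod_ne_zero_iff.mpr fun i hi => sub_ne_zero.2 fun h => ?_
    rcases Finset.mem_sdiff.mp hi with ⟨-, hij⟩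
    exact hij (by simpa using hlam h)
  set M : ℂ[X] := P + ∑ j, C (r j) * ∏ i ∈ univ \ {j}, (C (lam i) - X) with hM
  have hMeval : ∀ z, M.eval z = P.eval z + ∑ j, r j * ∏ i ∈ univ \ {j}, (lam i - z) := by
    intro z
    simp [hM, eval_finset_sum, eval_prod]
  have hroot : ∀ m, M.IsRoot (lam m) := by
    intro m
    have h1 : ∀ j ∈ (univ : Finset (Fin n)), j ≠ m →
        r j * ∏ i ∈ univ \ {j}, (lam i - lam m) = 0 := by
      intro j _ hj
      have hz0 : (∏ i ∈ univ \ {j}, (lam i - lam m)) = 0 :=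
        Finset.prod_eq_zero (Finset.mem_sdiff.mpr
          ⟨mem_univ m, Finset.notMem_singleton.mpr (Ne.symm hj)⟩) (sub_self (lam m))
      rw [hz0, mul_zero]
    have := hc m
    unfold Polynomial.IsRoot
    rw [hMeval, Finset.sum_eq_single m h1 (by simp), hr]
    simp only
    rw [div_neg, neg_mul, div_mul_eq_mul_div, mul_div_assoc, div_self this, mul_one]
    ring
  have hdvd : (∏ i, (X - C (lam i))) ∣ M :=
    Fintype.prod_dvd_of_coprime (Polynomial.pairwise_coprime_X_sub_C hlam)
      fun i => Polynomial.dvd_iff_isRoot.mpr (hroot i)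
  obtain ⟨S, hS⟩ := hdvd
  have hkey : Set.EqOn (fun z => P.eval z / ∏ i, (lam i - z))
      (fun z => (-1:ℂ)^n * S.eval z + ∑ j, r j * (z - lam j)⁻¹) (sphere (0:ℂ) R) := by
    intro z hz
    have hzabs : ‖z‖ = R := by simpa using (mem_sphere_zero_iff_norm).mp hz
    have hne : ∀ i, lam i - z ≠ 0 := by
      intro i
      refine sub_ne_zero.2 fun h => ?_
      have h6 := hR i
      rw [h, hzabs] at h6
      exact lt_irrefl R h6
    have hD : (∏ i, (lam i - z)) ≠ 0 := Finset.prod_ne_zero_iff.mpr fun i _ => hne i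
    have hAflip : (∏ i, (lam i - z)) = (-1:ℂ)^n * ∏ i, (z - lam i) := by
      calc (∏ i, (lam i - z)) = ∏ i, (-1:ℂ) * (z - lam i) :=
            Finset.prod_congr rfl fun i _ => by ring
        _ = (∏ _i : Fin n, (-1:ℂ)) * ∏ i, (z - lam i) := Finset.prod_mul_distrib
        _ = (-1:ℂ)^n * ∏ i, (z - lam i) := by simp
    have hMz : (∏ i, (z - lam i)) * S.eval z
        = P.eval z + ∑ j, r j * ∏ i ∈ univ \ {j}, (lam i - z) := by
      have h2 := congrArg (Polynomial.eval z) hS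
      rw [hMeval z] at h2
      simpa [eval_prod] using h2.symm
    have e1 : ∀ j, r j * (z - lam j)⁻¹
        = -(r j * ∏ i ∈ univ \ {j}, (lam i - z)) / ∏ i, (lam i - z) := by
      intro j
      have hsplit : (∏ i, (lam i - z)) = (lam j - z) * ∏ i ∈ univ \ {j}, (lam i - z) := by
        rw [Finset.sdiff_singleton_eq_erase]
        exact (Finset.mul_prod_erase univ _ (mem_univ j)).symm
      have h3 : lam j - z ≠ 0 := hne j
      have h4 : (∏ i ∈ univ \ {j}, (lam i - z)) ≠ 0 := by
        refine Finset.prod_ne_zero_iff.mpr fun i _ => hne i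
      have h5 : z - lam j ≠ 0 := by
        refine sub_ne_zero.2 fun h => h3 (by rw [h]; ring)
      rw [hsplit]
      field_simp
      ring
    have e2 : (-1:ℂ)^n * S.eval z
        = (P.eval z + ∑ j, r j * ∏ i ∈ univ \ {j}, (lam i - z)) / ∏ i, (lam i - z) := by
      rw [← hMz, hAflip]
      have hDz : (∏ i, (z - lam i)) ≠ 0 := by
        refine Finset.prod_ne_zero_iff.mpr fun i _ => ?_
        refine sub_ne_zero.2 fun h => hne i (by rw [h]; ring)
      field_simp
      ring_nf
      rw [pow_mul', neg_one_sq, one_pow, mul_one]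
    show P.eval z / (∏ i, (lam i - z))
        = (-1:ℂ)^n * S.eval z + ∑ j, r j * (z - lam j)⁻¹
    rw [Finset.sum_congr rfl fun j _ => e1 j, ← Finset.sum_div, e2, ← add_div]
    congr 1
    simp only [Finset.sum_neg_distrib]
    ring
  rw [circleIntegral.integral_congr hR0 hkey]
  have hball : ∀ j, lam j ∈ ball (0:ℂ) R := fun j => by
    simpa [mem_ball_zero_iff] using hR j
  have hsph : ∀ j, ∀ z ∈ sphere (0:ℂ) R, z - lam j ≠ 0 := by
    intro j z hz
    refine sub_ne_zero.2 fun h => ?_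
    have h7 : ‖z‖ = R := by simpa using (mem_sphere_zero_iff_norm).mp hz
    have h6 := hR j
    rw [← h, h7] at h6
    exact lt_irrefl R h6
  have hcont : ∀ j, ContinuousOn (fun z => r j * (z - lam j)⁻¹) (sphere (0:ℂ) R) := by
    intro j
    exact continuousOn_const.mul (((continuous_id.sub continuous_const).continuousOn).inv₀
      (hsph j))
  have hint1 : CircleIntegrable (fun z => (-1:ℂ)^n * S.eval z) 0 R :=
    ((continuous_const.mul S.continuous).continuousOn).circleIntegrable hR0
  have hint2 : CircleIntegrable (fun z => ∑ j, r j * (z - lam j)⁻¹) 0 R :=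
    (continuousOn_finset_sum univ fun j _ => hcont j).circleIntegrable hR0
  rw [circleIntegral_add _ _ _ _ hint1 hint2, circleIntegral.integral_const_mul,
    circleIntegral_poly S hR0, mul_zero, zero_add,
    circleIntegral_sum univ _ 0 R fun j _ => (hcont j).circleIntegrable hR0]
  have e3 : ∀ j : Fin n, (∮ z in C((0:ℂ), R), r j * (z - lam j)⁻¹)
      = r j * (2 * (π:ℂ) * Complex.I) := by
    intro j
    rw [circleIntegral.integral_const_mul,
      circleIntegral.integral_sub_inv_of_mem_ball (hball j)]
  rw [Finset.sum_congr rfl fun j _ => e3 j, ← Finset.sum_mul, mul_comm]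


lemma iterCircleInt_const_mul (k : ℕ) (a : ℂ) (f : (Fin k → ℂ) → ℂ) (R : Fin k → ℝ) :
    iterCircleInt k (fun z => a * f z) R = a * iterCircleInt k f R := by
  induction k with
  | zero => rfl
  | succ k ih =>
    show (∮ z in C(0, R 0), iterCircleInt k (fun w => a * f (Fin.cons z w)) (fun i => R i.succ))
      = a * ∮ z in C(0, R 0), iterCircleInt k (fun w => f (Fin.cons z w)) (fun i => R i.succ)
    have h : ∀ z : ℂ, iterCircleInt k (fun w => a * f (Fin.cons z w)) (fun i => R i.succ)
        = a * iterCircleInt k (fun w => f (Fin.cons z w)) (fun i => R i.succ) :=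
      fun z => ih _ _
    simp only [h]
    exact circleIntegral.integral_const_mul a _ 0 (R 0)

/-- minus the derivative of `∏ i (lam i - z)` at `lam j`, i.e. the residue denominator. -/
noncomputable def cden {n : ℕ} (lam : Fin n → ℂ) (j : Fin n) : ℂ :=
  -∏ i ∈ univ \ {j}, (lam i - lam j)

lemma sum_cons_reindex {n k : ℕ} (g : (Fin (k+1) → Fin n) → ℂ) :
    ∑ t : Fin (k+1) → Fin n, g t = ∑ j : Fin n, ∑ t : Fin k → Fin n, g (Fin.cons j t) := by
  rw [← Equiv.sum_comp (Fin.consEquiv fun _ => Fin n) g, Fintype.sum_prod_type]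
  rfl

lemma multiD {n : ℕ} {lam : Fin n → ℂ} (hlam : Function.Injective lam)
    (k : ℕ) (N : MvPolynomial (Fin k) ℂ) (R : Fin k → ℝ)
    (hR0 : ∀ l, 0 ≤ R l) (hR : ∀ (i : Fin n) (l : Fin k), ‖lam i‖ < R l) :
    iterCircleInt k (fun z => MvPolynomial.eval z N / ∏ l, ∏ i, (lam i - z l)) R
      = (2 * (π:ℂ) * Complex.I)^k *
        ∑ t : Fin k → Fin n, MvPolynomial.eval (lam ∘ t) N / ∏ l, cden lam (t l) := by
  induction k with
  | zero =>
    show MvPolynomial.eval (fun i => Fin.elim0 i) N / ∏ l : Fin 0, ∏ i, (lam i - Fin.elim0 l) = _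
    rw [Fintype.sum_unique]
    have h1 : (fun i => Fin.elim0 i : Fin 0 → ℂ) = lam ∘ default := funext fun i => i.elim0
    rw [h1]
    simp only [pow_zero, one_mul]
    congr 1
  | succ k ih =>
    set p : Polynomial (MvPolynomial (Fin k) ℂ) := MvPolynomial.finSuccEquiv ℂ k N with hp
    have hcons : ∀ (z0 : ℂ) (w : Fin k → ℂ),
        MvPolynomial.eval (Fin.cons z0 w) N
          = Polynomial.eval z0 (p.map (MvPolynomial.eval w)) :=
      fun z0 w => MvPolynomial.eval_eq_eval_mv_eval' w z0 N
    have hMz0 : ∀ (z0 : ℂ) (w : Fin k → ℂ),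
        MvPolynomial.eval w (Polynomial.eval (MvPolynomial.C z0) p)
          = Polynomial.eval z0 (p.map (MvPolynomial.eval w)) := by
      intro z0 w
      have h := Polynomial.eval₂_at_apply (p := p) (MvPolynomial.eval w) (MvPolynomial.C z0)
      rw [MvPolynomial.eval_C] at h
      rw [Polynomial.eval_map]
      exact h.symm
    set Pbig : ℂ[X] := ∑ t : Fin k → Fin n,
      Polynomial.C (∏ l, cden lam (t l))⁻¹ * (p.map (MvPolynomial.eval (lam ∘ t))) with hPbigdef
    have hPbigeval : ∀ z0 : ℂ, Polynomial.eval z0 Pbig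
        = ∑ t : Fin k → Fin n, (∏ l, cden lam (t l))⁻¹
            * Polynomial.eval z0 (p.map (MvPolynomial.eval (lam ∘ t))) := by
      intro z0
      rw [hPbigdef]
      rw [Polynomial.eval_finset_sum]
      exact Finset.sum_congr rfl fun t _ => by rw [Polynomial.eval_mul, Polynomial.eval_C]
    have hinner : ∀ z0 : ℂ,
        iterCircleInt k
          (fun (w : Fin k → ℂ) => MvPolynomial.eval (Fin.cons z0 w) N
            / ∏ l : Fin (k+1), ∏ i, (lam i - (Fin.cons z0 w : Fin (k+1) → ℂ) l)) (fun i => R i.succ)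
        = (2 * (π:ℂ) * Complex.I)^k
            * (Polynomial.eval z0 Pbig / ∏ i, (lam i - z0)) := by
      intro z0
      have hfun : (fun (w : Fin k → ℂ) => MvPolynomial.eval (Fin.cons z0 w) N
            / ∏ l : Fin (k+1), ∏ i, (lam i - (Fin.cons z0 w : Fin (k+1) → ℂ) l))
          = fun w => (∏ i, (lam i - z0))⁻¹ *
              (MvPolynomial.eval w (Polynomial.eval (MvPolynomial.C z0) p)
                / ∏ l : Fin k, ∏ i, (lam i - w l)) := by
        funext w
        rw [hMz0 z0 w, ← hcons z0 w, Fin.prod_univ_succ]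
        simp only [Fin.cons_zero, Fin.cons_succ]
        rw [div_eq_mul_inv, div_eq_mul_inv, mul_inv]
        ring
      rw [hfun, iterCircleInt_const_mul,
        ih (Polynomial.eval (MvPolynomial.C z0) p) (fun i => R i.succ)
          (fun l => hR0 l.succ) (fun i l => hR i l.succ)]
      have e : ∀ t : Fin k → Fin n,
          MvPolynomial.eval (lam ∘ t) (Polynomial.eval (MvPolynomial.C z0) p)
              / ∏ l, cden lam (t l)
            = (∏ l, cden lam (t l))⁻¹
              * Polynomial.eval z0 (p.map (MvPolynomial.eval (lam ∘ t))) := by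
        intro t
        rw [hMz0, div_eq_mul_inv, mul_comm]
      rw [Finset.sum_congr rfl fun t _ => e t, hPbigeval z0, div_eq_mul_inv]
      ring
    show (∮ z in C(0, R 0), iterCircleInt k
        (fun (w : Fin k → ℂ) => MvPolynomial.eval (Fin.cons z w) N
          / ∏ l : Fin (k+1), ∏ i, (lam i - (Fin.cons z w : Fin (k+1) → ℂ) l)) (fun i => R i.succ)) = _
    simp only [hinner]
    rw [circleIntegral.integral_const_mul,
      oneD hlam Pbig (hR0 0) (fun i => hR i 0)]
    have hPlam : ∀ j : Fin n, Polynomial.eval (lam j) Pbig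
        = ∑ t : Fin k → Fin n, (∏ l, cden lam (t l))⁻¹
            * MvPolynomial.eval (lam ∘ Fin.cons j t) N := by
      intro j
      rw [hPbigeval]
      refine Finset.sum_congr rfl fun t _ => ?_
      rw [← hcons (lam j) (lam ∘ t)]
      exact congrArg (fun f => (∏ l, cden lam (t l))⁻¹ * MvPolynomial.eval f N)
        (Fin.comp_cons lam j t).symm
    have hsum : (∑ t : Fin (k+1) → Fin n,
          MvPolynomial.eval (lam ∘ t) N / ∏ l, cden lam (t l))
        = ∑ j : Fin n, ∑ t : Fin k → Fin n,
            MvPolynomial.eval (lam ∘ Fin.cons j t) N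
              / (cden lam j * ∏ l, cden lam (t l)) := by
      rw [sum_cons_reindex]
      refine Finset.sum_congr rfl fun j _ => Finset.sum_congr rfl fun t _ => ?_
      congr 1
      rw [Fin.prod_univ_succ]
      simp only [Fin.cons_zero, Fin.cons_succ]
    rw [hsum]
    have hj : ∀ j : Fin n, Polynomial.eval (lam j) Pbig / (-∏ i ∈ univ \ {j}, (lam i - lam j))
        = ∑ t : Fin k → Fin n, MvPolynomial.eval (lam ∘ Fin.cons j t) N
            / (cden lam j * ∏ l, cden lam (t l)) := by
      intro j
      rw [hPlam j, show (-∏ i ∈ univ \ {j}, (lam i - lam j)) = cden lam j from rfl,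
        Finset.sum_div]
      refine Finset.sum_congr rfl fun t _ => ?_
      rw [div_eq_mul_inv, div_eq_mul_inv, mul_inv]
      ring
    rw [Finset.sum_congr rfl fun j _ => hj j]
    rw [pow_succ]
    ring

lemma per_sigma {n k : ℕ} {lam : Fin n → ℂ} (hlam : Function.Injective lam)
    (σ : Fin k ↪ Fin n) (Qv : ℂ) :
    Qv / (∏ m : Fin k,
        ((∏ l ∈ Finset.univ.filter (fun l : Fin k => m < l), (lam (σ l) - lam (σ m))) *
          (∏ j ∈ Finset.univ \ Finset.univ.map σ, (lam j - lam (σ m)))))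
    = (-1:ℂ)^k * (((∏ m : Fin k, ∏ l ∈ Finset.univ.filter (fun l : Fin k => m < l),
        (lam (σ m) - lam (σ l))) * Qv) / ∏ m : Fin k, cden lam (σ m)) := by
  classical
  have hainj : Function.Injective (fun m => lam (σ m)) := fun x y h => σ.injective (hlam h)
  -- split the cden product
  have hsplit : ∀ m : Fin k, cden lam (σ m)
      = -((∏ l ∈ univ \ {m}, (lam (σ l) - lam (σ m)))
          * ∏ j ∈ univ \ univ.map σ, (lam j - lam (σ m))) := by
    intro m
    have hset : (univ \ {σ m} : Finset (Fin n))
        = ((univ.map σ) \ {σ m}) ∪ (univ \ univ.map σ) := by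
      ext x
      simp only [Finset.mem_sdiff, Finset.mem_union, Finset.mem_univ, true_and,
        Finset.mem_singleton]
      constructor
      · intro hx
        by_cases hmem : x ∈ univ.map σ
        · exact Or.inl ⟨hmem, hx⟩
        · exact Or.inr hmem
      · rintro (⟨-, hx⟩ | hx)
        · exact hx
        · intro h
          exact hx (h ▸ Finset.mem_map_of_mem σ (Finset.mem_univ m))
    have hdisj : Disjoint ((univ.map σ) \ {σ m}) (univ \ univ.map σ) := by
      rw [Finset.disjoint_left]
      intro x hx hx'
      exact (Finset.mem_sdiff.mp hx').2 (Finset.mem_sdiff.mp hx).1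
    have hmapset : ((univ.map σ) \ {σ m} : Finset (Fin n)) = (univ \ {m}).map σ := by
      ext x
      simp only [Finset.mem_sdiff, Finset.mem_map, Finset.mem_univ, true_and,
        Finset.mem_singleton]
      constructor
      · rintro ⟨⟨b, rfl⟩, hx⟩
        exact ⟨b, fun hb => hx (by rw [hb]), rfl⟩
      · rintro ⟨b, hb, rfl⟩
        exact ⟨⟨b, rfl⟩, fun h => hb (σ.injective h)⟩
    show -∏ i ∈ univ \ {σ m}, (lam i - lam (σ m)) = _
    rw [hset, Finset.prod_union hdisj, hmapset, Finset.prod_map]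
  have hprodc : (∏ m : Fin k, cden lam (σ m))
      = (-1:ℂ)^k * ((∏ m : Fin k, ∏ l ∈ univ \ {m}, (lam (σ l) - lam (σ m)))
          * ∏ m : Fin k, ∏ j ∈ univ \ univ.map σ, (lam j - lam (σ m))) := by
    rw [Finset.prod_congr rfl fun m _ => hsplit m]
    rw [Finset.prod_congr rfl fun (m : Fin k) _ =>
      (neg_one_mul ((∏ l ∈ univ \ {m}, (lam (σ l) - lam (σ m)))
          * ∏ j ∈ univ \ univ.map σ, (lam j - lam (σ m)))).symm]
    rw [Finset.prod_mul_distrib, Finset.prod_const, Finset.card_univ, Fintype.card_fin,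
      Finset.prod_mul_distrib]
  have hUsplit : ∀ m : Fin k, (∏ l ∈ univ \ {m}, (lam (σ l) - lam (σ m)))
      = (∏ l ∈ univ.filter (fun l : Fin k => m < l), (lam (σ l) - lam (σ m)))
        * ∏ l ∈ univ.filter (fun l : Fin k => l < m), (lam (σ l) - lam (σ m)) := by
    intro m
    rw [← Finset.prod_union (by
      rw [Finset.disjoint_left]
      intro x hx hx'
      exact lt_asymm (Finset.mem_filter.mp hx).2 (Finset.mem_filter.mp hx').2)]
    refine Finset.prod_congr ?_ fun _ _ => rfl
    ext x
    simp only [Finset.mem_sdiff, Finset.mem_union, Finset.mem_filter, Finset.mem_univ, true_and,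
      Finset.mem_singleton]
    constructor
    · intro hx
      rcases lt_or_gt_of_ne hx with h | h
      · exact Or.inr h
      · exact Or.inl h
    · rintro (h | h)
      · exact ne_of_gt h
      · exact ne_of_lt h
  have hswap : (∏ m : Fin k, ∏ l ∈ univ.filter (fun l : Fin k => l < m),
        (lam (σ l) - lam (σ m)))
      = ∏ m : Fin k, ∏ l ∈ univ.filter (fun l : Fin k => m < l),
          (lam (σ m) - lam (σ l)) :=
    Finset.prod_comm' (fun x y => by
      simp only [Finset.mem_filter, Finset.mem_univ, true_and, and_comm])
  have hVne : (∏ m : Fin k, ∏ l ∈ univ.filter (fun l : Fin k => m < l),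
      (lam (σ m) - lam (σ l))) ≠ 0 := by
    refine Finset.prod_ne_zero_iff.mpr fun m _ => Finset.prod_ne_zero_iff.mpr fun l hl => ?_
    refine sub_ne_zero.2 fun hc => ?_
    exact ne_of_lt (Finset.mem_filter.mp hl).2 (hainj hc)
  have hWne : (∏ m : Fin k, ∏ l ∈ univ.filter (fun l : Fin k => m < l),
      (lam (σ l) - lam (σ m))) ≠ 0 := by
    refine Finset.prod_ne_zero_iff.mpr fun m _ => Finset.prod_ne_zero_iff.mpr fun l hl => ?_
    refine sub_ne_zero.2 fun hc => ?_
    exact ne_of_gt (Finset.mem_filter.mp hl).2 (hainj hc)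
  have hBne : (∏ m : Fin k, ∏ j ∈ univ \ univ.map σ, (lam j - lam (σ m))) ≠ 0 := by
    refine Finset.prod_ne_zero_iff.mpr fun m _ => Finset.prod_ne_zero_iff.mpr fun j hj => ?_
    refine sub_ne_zero.2 fun hc => ?_
    exact (Finset.mem_sdiff.mp hj).2 (hlam hc ▸ Finset.mem_map_of_mem σ (Finset.mem_univ m))
  have h1k : ((-1:ℂ)^k) ≠ 0 := pow_ne_zero _ (by norm_num)
  rw [Finset.prod_mul_distrib, hprodc, Finset.prod_congr rfl fun m _ => hUsplit m,
    Finset.prod_mul_distrib, hswap, ← mul_div_assoc,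
    div_eq_div_iff (mul_ne_zero hWne hBne)
      (mul_ne_zero h1k (mul_ne_zero (mul_ne_zero hWne hVne) hBne))]
  ring

end ResAux


/-- For `1 ≤ k ≤ n`, distinct `λ₁,…,λₙ ∈ ℂ` and a polynomial `Q` in `k`
variables, the localisation sum over injective maps `σ : {1,…,k} → {1,…,n}` of
`Q(λ_{σ(1)},…,λ_{σ(k)}) / ∏_{m=1}^k [∏_{l>m}(λ_{σ(l)}−λ_{σ(m)}) ∏_{j∉im σ}(λ_j−λ_{σ(m)})]`
equals the iterated residue at infinity
`Res_{z₁=∞}⋯Res_{z_k=∞} ∏_{m<l}(z_m−z_l) Q(z) dz / ∏_{l}∏_{i}(λ_i−z_l)`, i.e.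
`(−1)^k (2πi)^{−k}` times the nested contour integrals over circles `|z_l| = R_l` for any
radii all strictly larger than `max_i |λ_i|`. -/
theorem localisation_sum_eq_iterated_residue
    (k n : ℕ) (hk : 1 ≤ k) (hkn : k ≤ n)
    (lam : Fin n → ℂ) (hlam : Function.Injective lam)
    (Q : MvPolynomial (Fin k) ℂ)
    (R : Fin k → ℝ) (hR : ∀ (i : Fin n) (l : Fin k), ‖lam i‖ < R l) :
    ∑ σ : Fin k ↪ Fin n,
      MvPolynomial.eval (fun m => lam (σ m)) Q /
        (∏ m : Fin k,
          ((∏ l ∈ Finset.univ.filter (fun l : Fin k => m < l), (lam (σ l) - lam (σ m))) *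
            (∏ j ∈ Finset.univ \ Finset.univ.map σ, (lam j - lam (σ m)))))
      = (-1) ^ k * ((2 * (Real.pi : ℂ) * Complex.I)⁻¹) ^ k *
        iterCircleInt k
          (fun z =>
            (∏ m : Fin k, ∏ l ∈ Finset.univ.filter (fun l : Fin k => m < l), (z m - z l)) *
              MvPolynomial.eval z Q /
              ∏ l : Fin k, ∏ i : Fin n, (lam i - z l))
          R := by
  classical
  have hn : 0 < n := lt_of_lt_of_le hk hkn
  have hR0 : ∀ l, 0 ≤ R l := fun l =>
    le_trans (norm_nonneg (lam ⟨0, hn⟩)) (le_of_lt (hR ⟨0, hn⟩ l))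
  set N : MvPolynomial (Fin k) ℂ :=
    (∏ m : Fin k, ∏ l ∈ Finset.univ.filter (fun l : Fin k => m < l),
      (MvPolynomial.X m - MvPolynomial.X l)) * Q with hN
  have hNeval : ∀ z : Fin k → ℂ, MvPolynomial.eval z N
      = (∏ m : Fin k, ∏ l ∈ Finset.univ.filter (fun l : Fin k => m < l), (z m - z l))
        * MvPolynomial.eval z Q := by
    intro z
    rw [hN]
    simp
  have hfun : (fun z : Fin k → ℂ =>
      (∏ m : Fin k, ∏ l ∈ Finset.univ.filter (fun l : Fin k => m < l), (z m - z l)) *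
        MvPolynomial.eval z Q / ∏ l : Fin k, ∏ i : Fin n, (lam i - z l))
      = fun z => MvPolynomial.eval z N / ∏ l : Fin k, ∏ i : Fin n, (lam i - z l) := by
    funext z
    rw [hNeval]
  rw [hfun, ResAux.multiD hlam k N R hR0 hR]
  have hπ : (2 * (Real.pi:ℂ) * Complex.I) ≠ 0 :=
    mul_ne_zero (mul_ne_zero two_ne_zero (Complex.ofReal_ne_zero.mpr Real.pi_ne_zero))
      Complex.I_ne_zero
  have hcollapse : ∀ S : ℂ, (-1:ℂ)^k * ((2*(Real.pi:ℂ)*Complex.I)⁻¹)^k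
        * ((2*(Real.pi:ℂ)*Complex.I)^k * S) = (-1:ℂ)^k * S := by
    intro S
    have h1 : ((2*(Real.pi:ℂ)*Complex.I)⁻¹)^k * (2*(Real.pi:ℂ)*Complex.I)^k = 1 := by
      rw [← mul_pow, inv_mul_cancel₀ hπ, one_pow]
    calc (-1:ℂ)^k * ((2*(Real.pi:ℂ)*Complex.I)⁻¹)^k * ((2*(Real.pi:ℂ)*Complex.I)^k * S)
        = (-1:ℂ)^k * ((((2*(Real.pi:ℂ)*Complex.I)⁻¹)^k * (2*(Real.pi:ℂ)*Complex.I)^k) * S) := by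
          ring
      _ = (-1:ℂ)^k * S := by rw [h1, one_mul]
  rw [hcollapse]
  have hvanish : ∀ t : Fin k → Fin n, ¬Function.Injective t →
      MvPolynomial.eval (lam ∘ t) N / ∏ l, ResAux.cden lam (t l) = 0 := by
    intro t ht
    obtain ⟨a, b, hab, hne⟩ := Function.not_injective_iff.mp ht
    have hV0 : (∏ m : Fin k, ∏ l ∈ Finset.univ.filter (fun l : Fin k => m < l),
        ((lam ∘ t) m - (lam ∘ t) l)) = 0 := by
      rcases hne.lt_or_gt with h | h
      · exact Finset.prod_eq_zero (Finset.mem_univ a)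
          (Finset.prod_eq_zero (Finset.mem_filter.mpr ⟨Finset.mem_univ b, h⟩)
            (by simp [Function.comp, hab]))
      · exact Finset.prod_eq_zero (Finset.mem_univ b)
          (Finset.prod_eq_zero (Finset.mem_filter.mpr ⟨Finset.mem_univ a, h⟩)
            (by simp [Function.comp, hab]))
    rw [hNeval (lam ∘ t), hV0, zero_mul, zero_div]
  have hsum2 : (∑ t : Fin k → Fin n,
        MvPolynomial.eval (lam ∘ t) N / ∏ l, ResAux.cden lam (t l))
      = ∑ σ : Fin k ↪ Fin n,
          MvPolynomial.eval (lam ∘ ⇑σ) N / ∏ l, ResAux.cden lam (σ l) := by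
    rw [← Finset.sum_filter_of_ne (p := fun t : Fin k → Fin n => Function.Injective t)
      (fun t _ h => by by_contra hc; exact h (hvanish t hc))]
    rw [Finset.sum_subtype (p := fun t : Fin k → Fin n => Function.Injective t)
      (Finset.univ.filter fun t : Fin k → Fin n => Function.Injective t)
      (fun t => by simp only [Finset.mem_filter, Finset.mem_univ, true_and])
      (fun t => MvPolynomial.eval (lam ∘ t) N / ∏ l, ResAux.cden lam (t l))]
    exact Fintype.sum_equiv (Equiv.subtypeInjectiveEquivEmbedding (Fin k) (Fin n)) _ _
      (fun s => rfl)
  rw [hsum2, Finset.mul_sum]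
  refine Finset.sum_congr rfl fun σ _ => ?_
  rw [ResAux.per_sigma hlam σ (MvPolynomial.eval (fun m => lam (σ m)) Q)]
  congr 1
  rw [hNeval (lam ∘ ⇑σ)]
  rfl
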